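/- Let two agents at positions p, q ∈ ℤ² each have an admissible dance, supported on 2×2 subgrids D_p ∋ p and D_q ∋ q respectively, in an agent-only gridworld where all cells of D_p \ {p} and D_q \ {q} are unoccupied. If every constituent Move of the dance at p has support disjoint from D_q and every constituent Move of the dance at q has support disjoint from D_p, but D_p ∩ D_q ≠ ∅, then D_p ∩ D_q consists of a single cell which is diagonally opposite to p in D_p and diagonally opposite to q in D_q; consequently p and q differ by a 2-step bishop move (coordinate differences ±2 and ±2). -/
import Mathlib


/-- A cell of the gridworld. -/
abbrev Cell : Type := ℤ × ℤ

/-- Two cells are orthogonally adjacent if their `L¹`-distance is 1. -/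
def Adj (c c' : Cell) : Prop :=
  (c.1 - c'.1).natAbs + (c.2 - c'.2).natAbs = 1

/-- The `2 × 2` subgrid with bottom-left corner `a`. -/
def square (a : Cell) : Finset Cell :=
  {(a.1, a.2), (a.1 + 1, a.2), (a.1, a.2 + 1), (a.1 + 1, a.2 + 1)}

/-- The cell of the `2 × 2` subgrid `square a` diagonally opposite to `p`
(the unique cell of the subgrid at `L¹`-distance 2 from `p`). -/
def oppCell (a p : Cell) : Cell := (2 * a.1 + 1 - p.1, 2 * a.2 + 1 - p.2)

lemma mem_square (a c : Cell) :
    c ∈ square a ↔ (c.1 = a.1 ∨ c.1 = a.1 + 1) ∧ (c.2 = a.2 ∨ c.2 = a.2 + 1) := by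
  simp [square, Prod.ext_iff]
  omega

/-- Two agents' positions differ by a knight move: coordinate differences are
`±1` and `±2` in some order. -/
def KnightRel (p q : Cell) : Prop :=
  ((p.1 - q.1).natAbs = 1 ∧ (p.2 - q.2).natAbs = 2) ∨
  ((p.1 - q.1).natAbs = 2 ∧ (p.2 - q.2).natAbs = 1)

set_option maxHeartbeats 1000000 in

lemma aux_key (a1 a2 b1 b2 p1 p2 x1 x2 : ℤ)
    (hp' : (p1 = a1 ∨ p1 = a1 + 1) ∧ (p2 = a2 ∨ p2 = a2 + 1))
    (hpb : ¬((p1 = b1 ∨ p1 = b1+1) ∧ (p2 = b2 ∨ p2 = b2+1)))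
    (hn1 : ¬((2*a1+1-p1 = b1 ∨ 2*a1+1-p1 = b1+1) ∧ (p2 = b2 ∨ p2 = b2+1)))
    (hn2 : ¬((p1 = b1 ∨ p1 = b1+1) ∧ (2*a2+1-p2 = b2 ∨ 2*a2+1-p2 = b2+1)))
    (hxa : (x1 = a1 ∨ x1 = a1 + 1) ∧ (x2 = a2 ∨ x2 = a2 + 1))
    (hxb : (x1 = b1 ∨ x1 = b1 + 1) ∧ (x2 = b2 ∨ x2 = b2 + 1)) :
    x1 = 2*a1+1-p1 ∧ x2 = 2*a2+1-p2 := by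
  constructor <;> omega

lemma aux_two (a1 a2 b1 b2 p1 p2 q1 q2 : ℤ)
    (hq' : q2 = b2 ∨ q2 = b2 + 1)
    (hn2 : ¬((p1 = b1 ∨ p1 = b1+1) ∧ (2*a2+1-p2 = b2 ∨ 2*a2+1-p2 = b2+1)))
    (hp1 : p1 = a1 ∨ p1 = a1 + 1) (hq1 : q1 = b1 ∨ q1 = b1 + 1)
    (h1 : 2*a1+1-p1 = 2*b1+1-q1) (h2 : 2*a2+1-p2 = 2*b2+1-q2) :
    (p1 - q1).natAbs = 2 := by
  omega

/-- two agents at `p` and `q` each have an admissible dance, on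
the 2×2 subgrids `square a ∋ p` and `square b ∋ q` respectively, in an
agent-only gridworld with state `{p, q}` where the other cells of the two
subgrids are unoccupied. If every constituent Move of the dance at `p`
(admissible at `p`) has support disjoint from `square b`, and every
constituent Move of the dance at `q` (admissible at `q`) has support disjoint
from `square a`, but `square a ∩ square b ≠ ∅`, then the intersection is a
single cell which is diagonally opposite to `p` in `square a` and diagonally
opposite to `q` in `square b`; consequently both coordinate differences of
`p` and `q` equal `±2` (a 2-step bishop move). -/

theorem dances_interference_bishop (a b p q : Cell) (hpq : p ≠ q)
    (hp : p ∈ square a) (hq : q ∈ square b)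
    (hemptya : ∀ d ∈ square a, d ≠ p → d ∉ ({p, q} : Finset Cell))
    (hemptyb : ∀ d ∈ square b, d ≠ q → d ∉ ({p, q} : Finset Cell))
    (hma : ∀ d ∈ square a, Adj p d →
      Disjoint ({p, d} : Finset Cell) (square b))
    (hmb : ∀ d ∈ square b, Adj q d →
      Disjoint ({q, d} : Finset Cell) (square a))
    (hinter : square a ∩ square b ≠ ∅) :
    square a ∩ square b = {oppCell a p} ∧ oppCell a p = oppCell b q ∧
      (p.1 - q.1).natAbs = 2 ∧ (p.2 - q.2).natAbs = 2 := by
  have hp' := (mem_square a p).1 hp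
  have hq' := (mem_square b q).1 hq
  have h1 := hma (2*a.1+1-p.1, p.2) (by rw [mem_square]; simp; omega)
      (by simp [Adj]; omega)
  have h2 := hma (p.1, 2*a.2+1-p.2) (by rw [mem_square]; simp; omega)
      (by simp [Adj]; omega)
  have h3 := hmb (2*b.1+1-q.1, q.2) (by rw [mem_square]; simp; omega)
      (by simp [Adj]; omega)
  have h4 := hmb (q.1, 2*b.2+1-q.2) (by rw [mem_square]; simp; omega)
      (by simp [Adj]; omega)
  rw [Finset.disjoint_left] at h1 h2 h3 h4
  have hpb : ¬((p.1 = b.1 ∨ p.1 = b.1+1) ∧ (p.2 = b.2 ∨ p.2 = b.2+1)) := by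
    have := h1 (show p ∈ ({p, _} : Finset Cell) by simp)
    rwa [mem_square] at this
  have hn1 : ¬((2*a.1+1-p.1 = b.1 ∨ 2*a.1+1-p.1 = b.1+1) ∧ (p.2 = b.2 ∨ p.2 = b.2+1)) := by
    have := h1 (show ((2*a.1+1-p.1, p.2) : Cell) ∈ _ by simp)
    rw [mem_square] at this; simpa using this
  have hn2 : ¬((p.1 = b.1 ∨ p.1 = b.1+1) ∧ (2*a.2+1-p.2 = b.2 ∨ 2*a.2+1-p.2 = b.2+1)) := by
    have := h2 (show ((p.1, 2*a.2+1-p.2) : Cell) ∈ _ by simp)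
    rw [mem_square] at this; simpa using this
  have hqa : ¬((q.1 = a.1 ∨ q.1 = a.1+1) ∧ (q.2 = a.2 ∨ q.2 = a.2+1)) := by
    have := h3 (show q ∈ ({q, _} : Finset Cell) by simp)
    rwa [mem_square] at this
  have hn3 : ¬((2*b.1+1-q.1 = a.1 ∨ 2*b.1+1-q.1 = a.1+1) ∧ (q.2 = a.2 ∨ q.2 = a.2+1)) := by
    have := h3 (show ((2*b.1+1-q.1, q.2) : Cell) ∈ _ by simp)
    rw [mem_square] at this; simpa using this
  have hn4 : ¬((q.1 = a.1 ∨ q.1 = a.1+1) ∧ (2*b.2+1-q.2 = a.2 ∨ 2*b.2+1-q.2 = a.2+1)) := by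
    have := h4 (show ((q.1, 2*b.2+1-q.2) : Cell) ∈ _ by simp)
    rw [mem_square] at this; simpa using this
  have key : ∀ x ∈ square a ∩ square b, x = oppCell a p := by
    intro x hx
    rw [Finset.mem_inter, mem_square, mem_square] at hx
    have := aux_key a.1 a.2 b.1 b.2 p.1 p.2 x.1 x.2 hp' hpb hn1 hn2 hx.1 hx.2
    rw [oppCell, Prod.ext_iff]
    exact this
  obtain ⟨c, hc⟩ := Finset.nonempty_iff_ne_empty.2 hinter
  have hc1 := key c hc
  rw [Finset.mem_inter, mem_square, mem_square] at hc
  have hcop : c.1 = 2*a.1+1-p.1 ∧ c.2 = 2*a.2+1-p.2 := by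
    rw [oppCell, Prod.ext_iff] at hc1; exact hc1
  have hcop' : c.1 = 2*b.1+1-q.1 ∧ c.2 = 2*b.2+1-q.2 :=
    aux_key b.1 b.2 a.1 a.2 q.1 q.2 c.1 c.2 hq' hqa hn3 hn4 hc.2 hc.1
  have heq1 : 2*a.1+1-p.1 = 2*b.1+1-q.1 := hcop.1.symm.trans hcop'.1
  have heq2 : 2*a.2+1-p.2 = 2*b.2+1-q.2 := hcop.2.symm.trans hcop'.2
  refine ⟨?_, ?_, ?_, ?_⟩
  · apply Finset.eq_singleton_iff_unique_mem.2
    refine ⟨?_, key⟩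
    rw [← hc1, Finset.mem_inter, mem_square, mem_square]
    exact hc
  · rw [oppCell, oppCell, Prod.ext_iff]
    exact ⟨heq1, heq2⟩
  · exact aux_two a.1 a.2 b.1 b.2 p.1 p.2 q.1 q.2 hq'.2 hn2 hp'.1 hq'.1 heq1 heq2
  · have hn1' : ¬((p.2 = b.2 ∨ p.2 = b.2+1) ∧ (2*a.1+1-p.1 = b.1 ∨ 2*a.1+1-p.1 = b.1+1)) :=
      fun h => hn1 ⟨h.2, h.1⟩
    exact aux_two a.2 a.1 b.2 b.1 p.2 p.1 q.2 q.1 hq'.1 hn1' hp'.2 hq'.2 heq2 heq1
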